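/- Let T : ℝ → ℝ be defined by T(t) = (3/2)t if t ≤ 2/3 and T(t) = 2 - (3/2)t if t > 2/3. Then the point 1 is not preperiodic for T: there do not exist integers n > m ≥ 0 with Tⁿ(1) = Tᵐ(1). -/
import Mathlib


noncomputable def T (t : ℝ) : ℝ := if t ≤ 2/3 then 3/2 * t else 2 - 3/2 * t

lemma orbit_form (n : ℕ) : ∃ a : ℤ, Odd a ∧ T^[n] 1 = (a : ℝ) / 2^n ∧
    0 ≤ T^[n] 1 ∧ T^[n] 1 ≤ 1 := by
  induction n with
  | zero => exact ⟨1, odd_one, by norm_num, by norm_num, by norm_num⟩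
  | succ n ih =>
    obtain ⟨a, ha, hx, h0, h1⟩ := ih
    rw [Function.iterate_succ_apply']
    set x := T^[n] 1 with hxdef
    by_cases hc : x ≤ 2/3
    · have hT : T x = 3/2 * x := if_pos hc
      refine ⟨3 * a, Odd.mul (⟨1, by norm_num⟩ : Odd (3:ℤ)) ha, ?_, ?_, ?_⟩
      · rw [hT, hx]; push_cast; ring
      · rw [hT]; linarith
      · rw [hT]; linarith
    · push_neg at hc
      have hT : T x = 2 - 3/2 * x := if_neg (not_le.mpr hc)
      refine ⟨2^(n+2) - 3 * a, ?_, ?_, ?_, ?_⟩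
      · rcases ha with ⟨k, hk⟩
        exact ⟨2^(n+1) - 3*k - 2, by rw [hk]; ring⟩
      · rw [hT, hx]
        push_cast
        field_simp
        ring
      · rw [hT]; linarith
      · rw [hT]; linarith

theorem one_not_preperiodic :
    ¬ ∃ n m : ℕ, m < n ∧ T^[n] 1 = T^[m] 1 := by
  rintro ⟨n, m, hmn, heq⟩
  obtain ⟨a, ha, hxa, -, -⟩ := orbit_form n
  obtain ⟨b, hb, hxb, -, -⟩ := orbit_form m
  rw [hxa, hxb] at heq
  have h2n : (2:ℝ)^n ≠ 0 := by positivity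
  have h2m : (2:ℝ)^m ≠ 0 := by positivity
  have hmul : (a : ℝ) * 2^m = (b : ℝ) * 2^n := by
    field_simp at heq
    linarith [heq]
  have hmulZ : a * 2^m = b * 2^n := by exact_mod_cast hmul
  have hsplit : (2:ℤ)^n = 2^(n-m) * 2^m := by
    rw [← pow_add]
    congr 1
    omega
  rw [hsplit, ← mul_assoc] at hmulZ
  have haeq : a = b * 2^(n-m) := mul_right_cancel₀ (by positivity) hmulZ
  have hdvd : (2:ℤ) ∣ a := by
    rw [haeq]
    exact Dvd.dvd.mul_left (dvd_pow_self 2 (by omega)) b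
  rcases ha with ⟨k, hk⟩
  omega
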